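/- For complex z with Re z > 0 and real k with 0 < k < 2, the digamma function satisfies the multiplication/Taylor expansion ψ(kz) = ∑_{n=0}^∞ (k-1)^n z^n ψ^{(n)}(z) / n!, where ψ^{(n)} is the n-th polygamma function. -/

import Mathlib

noncomputable def cdigamma (z : ℂ) : ℂ := deriv Complex.Gamma z / Complex.Gamma z

/-- `polygamma n` is the n-th derivative of the digamma function. -/
noncomputable def polygamma (n : ℕ) (z : ℂ) : ℂ := iteratedDeriv n cdigamma z

theorem digamma_multiplication (z : ℂ) (hz : 0 < z.re) (k : ℝ) (hk0 : 0 < k) (hk2 : k < 2) :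
    HasSum (fun n : ℕ => (k - 1 : ℂ) ^ n * z ^ n * polygamma n z / n.factorial)
      (cdigamma (k * z)) := by
  have hz0 : (0:ℝ) < ‖z‖ := by
    have : z ≠ 0 := by
      intro h; rw [h] at hz; simp at hz
    simpa [norm_pos_iff] using this
  set B := Metric.ball z ‖z‖ with hB
  have hne : ∀ w ∈ B, ∀ m : ℕ, w ≠ -m := by
    intro w hw m hwm
    rw [Metric.mem_ball, hwm, dist_eq_norm] at hw
    have h1 : ‖(-(m:ℂ)) - z‖ ^ 2 = (z.re + m) ^ 2 + z.im ^ 2 := by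
      rw [Complex.sq_norm, Complex.normSq_apply]
      simp
      ring
    have h2 : ‖z‖ ^ 2 = z.re ^ 2 + z.im ^ 2 := by
      rw [Complex.sq_norm, Complex.normSq_apply]; ring
    have hm : (0:ℝ) ≤ (m:ℝ) := Nat.cast_nonneg m
    nlinarith [hw, norm_nonneg ((-(m:ℂ)) - z), norm_nonneg z]
  have hGammaDiff : DifferentiableOn ℂ Complex.Gamma B := fun w hw =>
    (Complex.differentiableAt_Gamma w (hne w hw)).differentiableWithinAt
  have hGammaAn : AnalyticOnNhd ℂ Complex.Gamma B :=
    hGammaDiff.analyticOnNhd Metric.isOpen_ball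
  have hDerivAn : AnalyticOnNhd ℂ (deriv Complex.Gamma) B := hGammaAn.deriv
  have hDiff : DifferentiableOn ℂ cdigamma B := by
    intro w hw
    exact (((hDerivAn w hw).div (hGammaAn w hw)
      (Complex.Gamma_ne_zero (hne w hw))).differentiableAt.differentiableWithinAt)
  have hmem : (k : ℂ) * z ∈ B := by
    rw [Metric.mem_ball, dist_eq_norm]
    have : (k:ℂ) * z - z = ((k:ℂ) - 1) * z := by ring
    rw [this, norm_mul]
    have hk1 : ‖(k:ℂ) - 1‖ < 1 := by
      rw [show ((k:ℂ) - 1) = ((k - 1 : ℝ) : ℂ) by push_cast; ring, Complex.norm_real,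
        Real.norm_eq_abs, abs_lt]
      constructor <;> linarith
    calc ‖(k:ℂ) - 1‖ * ‖z‖ < 1 * ‖z‖ := by
          exact mul_lt_mul_of_pos_right hk1 hz0
      _ = ‖z‖ := one_mul _
  have H := Complex.hasSum_taylorSeries_on_ball hDiff hmem
  refine H.congr_fun fun n => ?_
  rw [smul_eq_mul, smul_eq_mul]
  have : (k:ℂ) * z - z = ((k:ℂ) - 1) * z := by ring
  rw [this, mul_pow]
  unfold polygamma
  field_simp
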